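/- arXiv:1602.07965 — 2 statements merged into one kernel-verified Lean document; each statement's English description precedes it below -/
import Mathlib

section
/- For a connected, locally path connected space X, the following are equivalent: (1) π₁^wh(X,x₀) is T₀; (2) π₁^wh(X,x₀) is T₁; (3) π₁^wh(X,x₀) is T₂ (Hausdorff); (4) π₁^wh(X,x₀) is T₃ (regular and T₁); (5) π₁^s(X,x₀) is the trivial subgroup; (6) π₁^wh(X,x₀) is totally separated. Moreover, π₁^wh(X,x₀) is always regular. -/
open CategoryTheory unitInterval Topology

universe u v

noncomputable section

attribute [local instance] Path.Homotopic.setoid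

namespace GCPaper

variable {X : Type u} [TopologicalSpace X]

/-- The homotopy class of a loop, as an element of the fundamental group. -/
def loopClass {x : X} (γ : Path x x) : FundamentalGroup X x :=
  (⟦γ⟧ : (⟨x⟩ : FundamentalGroupoid X) ⟶ ⟨x⟩)

/-- The homomorphism on fundamental groups induced by a continuous map. -/
def π₁map {A B : Type u} [TopologicalSpace A] [TopologicalSpace B] (f : C(A, B)) (a : A) :
    FundamentalGroup A a →* FundamentalGroup B (f a) :=
  Functor.mapEnd (FundamentalGroupoid.mk (a : TopCat.of A))
    ((FundamentalGroupoid.fundamentalGroupoidFunctor.map (TopCat.ofHom f) :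
        Grpd.of (FundamentalGroupoid (TopCat.of A)) ⟶ Grpd.of (FundamentalGroupoid (TopCat.of B))) :
      FundamentalGroupoid (TopCat.of A) ⥤ FundamentalGroupoid (TopCat.of B))

/-- Transport of the fundamental group along an equality of basepoints. -/
def eqCast {x x' : X} (h : x = x') : FundamentalGroup X x ≃* FundamentalGroup X x' := by
  subst h; exact MulEquiv.refl _

/-- `f₁*π₁(A, a)`, the image of the fundamental group of `A` in the fundamental group of `B`,
based at a point `x` equal to `f a`. -/
def imageSubgroup {A : Type u} [TopologicalSpace A]
    (f : C(A, X)) (a : A) (x : X) (h : f a = x) : Subgroup (FundamentalGroup X x) :=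
  Subgroup.map (eqCast h).toMonoidHom (π₁map f a).range

/-- `i_*π₁(U, x)`, the image of the fundamental group of `U` in the fundamental group of `X`
under the inclusion-induced homomorphism. -/
def iStar (x : X) (U : Set X) (hx : x ∈ U) : Subgroup (FundamentalGroup X x) :=
  imageSubgroup ⟨(Subtype.val : U → X), continuous_subtype_val⟩ ⟨x, hx⟩ x rfl

/-- The set of homotopy classes of small loops at `x` :
loops which have a representative in every open neighbourhood of `x`. -/
def smallSet (x : X) : Set (FundamentalGroup X x) :=
  { g | ∀ (U : Set X) (_ : IsOpen U) (hx : x ∈ U), g ∈ iStar x U hx }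

/-- Conjugation of a loop class at `x` along a path `α` from `x₀` to `x` :
`g ↦ [α ∗ g ∗ α⁻¹]`. -/
def conjAlong {x₀ x : X} (α : Path x₀ x) (g : FundamentalGroup X x) : FundamentalGroup X x₀ :=
  (FundamentalGroup.fundamentalGroupMulEquivOfPath α).symm g

/-- The subgroup `[α⁻¹ H α]` of `π₁(X, x)` for a path `α` from `x₀` to `x` and
`H ≤ π₁(X, x₀)`. -/
def conjSubgroup {x₀ x : X} (α : Path x₀ x) (H : Subgroup (FundamentalGroup X x₀)) :
    Subgroup (FundamentalGroup X x) :=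
  Subgroup.map (FundamentalGroup.fundamentalGroupMulEquivOfPath α).toMonoidHom H

/-- `π₁^sg(X, x₀)`: the subgroup generated by small loops conjugated along paths from `x₀`. -/
def sgSubgroup (x₀ : X) : Subgroup (FundamentalGroup X x₀) :=
  Subgroup.closure { g | ∃ (x : X) (α : Path x₀ x) (s : FundamentalGroup X x),
    s ∈ smallSet x ∧ g = conjAlong α s }

/-- The Spanier group of an open cover. -/
def spanierGroup (x₀ : X) (𝒰 : Set (Set X)) : Subgroup (FundamentalGroup X x₀) :=
  Subgroup.closure { g | ∃ (x : X) (α : Path x₀ x) (U : Set X) (_ : U ∈ 𝒰) (β : Path x x),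
    Set.range β ⊆ U ∧ g = conjAlong α (loopClass β) }

/-- `X` is semilocally small generated (at `x₀`). -/
def SemilocallySmallGenerated (x₀ : X) : Prop :=
  ∃ 𝒰 : Set (Set X), (∀ U ∈ 𝒰, IsOpen U) ∧ ⋃₀ 𝒰 = Set.univ ∧
    spanierGroup x₀ 𝒰 ≤ sgSubgroup x₀

/-- `X` is homotopically Hausdorff relative to the subgroup `H`. -/
def HomotopicallyHausdorffRel (x₀ : X) (H : Subgroup (FundamentalGroup X x₀)) : Prop :=
  ∀ (x : X) (α : Path x₀ x) (g : FundamentalGroup X x₀), g ∉ H →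
    ∃ U : Set X, IsOpen U ∧ x ∈ U ∧
      ∀ γ : Path x x, Set.range γ ⊆ U → ¬ ∃ h ∈ H, conjAlong α (loopClass γ) = h * g

/-- The quasitopological fundamental group topology: the quotient topology induced by the
compact-open topology on the loop space. -/
def qtop (X : Type u) [TopologicalSpace X] (x : X) : TopologicalSpace (FundamentalGroup X x) :=
  TopologicalSpace.coinduced (fun γ : Path x x => loopClass γ) inferInstance

/-- The basic sets of the whisker topology on the fundamental group. -/
def whBasis (X : Type u) [TopologicalSpace X] (x₀ : X) : Set (Set (FundamentalGroup X x₀)) :=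
  { S | ∃ (g : FundamentalGroup X x₀) (U : Set X) (_ : IsOpen U) (hx : x₀ ∈ U),
      S = (g * ·) '' (iStar x₀ U hx : Set (FundamentalGroup X x₀)) }

/-- The whisker topology on the fundamental group. -/
def whTop (X : Type u) [TopologicalSpace X] (x₀ : X) :
    TopologicalSpace (FundamentalGroup X x₀) :=
  TopologicalSpace.generateFrom (whBasis X x₀)

/-- The unique lifting property for a pointed map `p : (X', x') → (X, p x')`. -/
def HasUL {X' : Type u} [TopologicalSpace X'] (p : C(X', X)) (x' : X') : Prop :=
  ∀ (Y : Type u) (_ : TopologicalSpace Y) (y : Y), ConnectedSpace Y → LocallyPathConnectedSpace Y →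
    ∀ (f : C(Y, X)) (hf : f y = p x'),
      imageSubgroup f y (p x') hf ≤ imageSubgroup p x' (p x') rfl →
      ∃! g : C(Y, X'), g y = x' ∧ p.comp g = f

/-- `H` is a generalized covering subgroup of `π₁(X, x₀)`. -/
def IsGCSubgroup (x₀ : X) (H : Subgroup (FundamentalGroup X x₀)) : Prop :=
  ∃ (X' : Type u) (_ : TopologicalSpace X') (x' : X') (p : C(X', X)) (hp : p x' = x₀),
    ConnectedSpace X' ∧ LocallyPathConnectedSpace X' ∧ HasUL p x' ∧ imageSubgroup p x' x₀ hp = H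

/-- `π₁^gc(X, x₀)`: the intersection of all generalized covering subgroups. -/
def gcSubgroup (X : Type u) [TopologicalSpace X] (x₀ : X) : Subgroup (FundamentalGroup X x₀) :=
  sInf { H | IsGCSubgroup x₀ H }

/-- Unique path lifting: paths lift with prescribed initial point, and lifts with the same
initial point are unique. -/
def UniquePathLifts {X' : Type u} [TopologicalSpace X'] (p : X' → X) : Prop :=
  (∀ (γ : C(I, X)) (x' : X'), p x' = γ 0 → ∃ γ' : C(I, X'), γ' 0 = x' ∧ p ∘ γ' = γ) ∧
  (∀ γ₁ γ₂ : C(I, X'), γ₁ 0 = γ₂ 0 → p ∘ γ₁ = p ∘ γ₂ → γ₁ = γ₂)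

/-- `H` is a semicovering subgroup of `π₁(X, x₀)`. -/
def IsSemicoveringSubgroup (x₀ : X) (H : Subgroup (FundamentalGroup X x₀)) : Prop :=
  ∃ (X' : Type u) (_ : TopologicalSpace X') (x' : X') (p : C(X', X)) (hp : p x' = x₀),
    ConnectedSpace X' ∧ LocallyPathConnectedSpace X' ∧ Function.Surjective p ∧
    IsLocalHomeomorph p ∧ UniquePathLifts (p : X' → X) ∧ imageSubgroup p x' x₀ hp = H

/-- `H` is a covering subgroup of `π₁(X, x₀)`. -/
def IsCoveringSubgroup (x₀ : X) (H : Subgroup (FundamentalGroup X x₀)) : Prop :=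
  ∃ (X' : Type u) (_ : TopologicalSpace X') (x' : X') (p : C(X', X)) (hp : p x' = x₀),
    ConnectedSpace X' ∧ LocallyPathConnectedSpace X' ∧ IsCoveringMap p ∧ imageSubgroup p x' x₀ hp = H

/-- `X` is semilocally `K`-connected at `x`. -/
def SemilocallyConnectedAt (x : X) (K : Subgroup (FundamentalGroup X x)) : Prop :=
  ∃ (U : Set X) (_ : IsOpen U) (hx : x ∈ U), iStar x U hx ≤ K

section WhiskerSpace

variable {X : Type u} [TopologicalSpace X] {x₀ : X}

/-- The space of paths in `X` starting at `x₀`, recorded with their endpoints. -/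
def PathStar (x₀ : X) : Type u := Σ x : X, Path x₀ x

/-- The relation identifying two paths `α, β` from `x₀` when they have the same endpoint and
`[α ∗ β⁻¹] ∈ H`. -/
def whiskerRel (H : Subgroup (FundamentalGroup X x₀)) :
    PathStar x₀ → PathStar x₀ → Prop := fun a b =>
  ∃ h : b.1 = a.1, loopClass (a.2.trans (h ▸ b.2 : Path x₀ a.1).symm) ∈ H

/-- The space `X̃_H` of `∼_H`-classes of paths starting at `x₀`. -/
def XH (H : Subgroup (FundamentalGroup X x₀)) : Type u := Quot (whiskerRel H)

/-- The endpoint projection `p_H : X̃_H → X`. -/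
def pH (H : Subgroup (FundamentalGroup X x₀)) : XH H → X :=
  Quot.lift (fun a => a.1) (by rintro a b ⟨h, -⟩; exact h.symm)

/-- The point of `X̃_H` given by the class of a path from `x₀`. -/
def XH.mk (H : Subgroup (FundamentalGroup X x₀)) (a : PathStar x₀) : XH H :=
  Quot.mk (whiskerRel H) a

/-- The basepoint `ẽ_H` of `X̃_H`: the class of the constant path at `x₀`. -/
def eH (H : Subgroup (FundamentalGroup X x₀)) : XH H :=
  XH.mk H ⟨x₀, Path.refl x₀⟩

/-- The basic set `(U, ⟨α⟩_H)` of the whisker topology on `X̃_H`: classes of continuations of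
`α` inside `U`. -/
def contSet (H : Subgroup (FundamentalGroup X x₀)) (a : PathStar x₀) (U : Set X) :
    Set (XH H) :=
  { z | ∃ (y : X) (γ : Path a.1 y), Set.range γ ⊆ U ∧ z = XH.mk H ⟨y, a.2.trans γ⟩ }

/-- The whisker topology on `X̃_H`. -/
instance XH.topologicalSpace (H : Subgroup (FundamentalGroup X x₀)) :
    TopologicalSpace (XH H) :=
  TopologicalSpace.generateFrom
    { S | ∃ (a : PathStar x₀) (U : Set X), IsOpen U ∧ S = contSet H a U }

lemma XH.mk_trans_refl (H : Subgroup (FundamentalGroup X x₀)) (a : PathStar x₀) :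
    XH.mk H ⟨a.1, a.2.trans (Path.refl a.1)⟩ = XH.mk H a := by
  apply Quot.sound
  refine ⟨rfl, ?_⟩
  have h1 : (a.2.trans (Path.refl a.1)).Homotopic a.2 := ⟨Path.Homotopy.transRefl a.2⟩
  have h2 : ((a.2.trans (Path.refl a.1)).trans a.2.symm).Homotopic (a.2.trans a.2.symm) :=
    h1.hcomp (Path.Homotopic.refl _)
  have h3 : (a.2.trans a.2.symm).Homotopic (Path.refl x₀) :=
    ⟨(Path.Homotopy.reflTransSymm a.2).symm⟩
  have : loopClass ((a.2.trans (Path.refl a.1)).trans a.2.symm) = 1 := by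
    exact (Quotient.sound (h2.trans h3) : _ = (⟦Path.refl x₀⟧ : Path.Homotopic.Quotient x₀ x₀))
  exact this ▸ H.one_mem

lemma continuous_pH (H : Subgroup (FundamentalGroup X x₀)) : Continuous (pH H) := by
  rw [continuous_def]
  intro U hU
  have : pH H ⁻¹' U = ⋃ (a : PathStar x₀) (_ : a.1 ∈ U), contSet H a U := by
    ext z
    constructor
    · intro hz
      obtain ⟨a, rfl⟩ := Quot.exists_rep z
      refine Set.mem_iUnion₂.mpr ⟨a, hz, a.1, Path.refl a.1, ?_, (XH.mk_trans_refl H a).symm⟩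
      rw [Path.refl_range]
      exact Set.singleton_subset_iff.mpr hz
    · intro hz
      obtain ⟨a, ha, y, γ, hγ, rfl⟩ := Set.mem_iUnion₂.mp hz
      have : y ∈ U := hγ ⟨1, γ.target⟩
      exact this
  rw [this]
  exact isOpen_iUnion fun a => isOpen_iUnion fun ha =>
    TopologicalSpace.isOpen_generateFrom_of_mem ⟨a, U, hU, rfl⟩

/-- The endpoint projection `p_H` as a continuous map. -/
def pHMap (H : Subgroup (FundamentalGroup X x₀)) : C(XH H, X) :=
  ⟨pH H, continuous_pH H⟩

end WhiskerSpace

section Helpers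

open FundamentalGroupoid

variable {X : Type u} [TopologicalSpace X]

lemma loopClass_surj {x : X} (g : FundamentalGroup X x) : ∃ γ : Path x x, loopClass γ = g := by
  obtain ⟨γ, hγ⟩ := Quotient.exists_rep
    (g : Path.Homotopic.Quotient x x)
  exact ⟨γ, hγ⟩

lemma π₁map_loopClass {A B : Type u} [TopologicalSpace A] [TopologicalSpace B]
    (f : C(A, B)) (a : A) (γ : Path a a) :
    π₁map f a (loopClass γ) = loopClass (γ.map f.continuous) := by
  rfl

lemma eqCast_rfl {x : X} : eqCast (rfl : x = x) = MulEquiv.refl (FundamentalGroup X x) := rfl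

lemma mem_iStar_iff {x : X} {U : Set X} (hx : x ∈ U) (g : FundamentalGroup X x) :
    g ∈ iStar x U hx ↔ ∃ γ : Path x x, Set.range γ ⊆ U ∧ loopClass γ = g := by
  rw [iStar, imageSubgroup, eqCast_rfl]
  constructor
  · rintro ⟨g', ⟨h, rfl⟩, rfl⟩
    obtain ⟨β, rfl⟩ := loopClass_surj h
    refine ⟨β.map continuous_subtype_val, ?_, ?_⟩
    · rintro _ ⟨t, rfl⟩
      exact (β t).2
    · rw [π₁map_loopClass]
      rfl
  · rintro ⟨γ, hγ, rfl⟩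
    refine ⟨loopClass γ, ?_, rfl⟩
    refine ⟨loopClass (X := U) ⟨⟨fun t => ⟨γ t, hγ (Set.mem_range_self t)⟩,
      (Continuous.subtype_mk γ.continuous _)⟩, Subtype.ext γ.source, Subtype.ext γ.target⟩, ?_⟩
    rw [π₁map_loopClass]
    congr 1

lemma iStar_mono {x : X} {U V : Set X} (hUV : U ⊆ V) (hxU : x ∈ U) (hxV : x ∈ V) :
    iStar x U hxU ≤ iStar x V hxV := by
  intro g hg
  rw [mem_iStar_iff] at hg ⊢
  obtain ⟨γ, hγ, rfl⟩ := hg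
  exact ⟨γ, hγ.trans hUV, rfl⟩

lemma mem_coset_iff {G : Type*} [Group G] {K : Subgroup G} {g h : G} :
    g ∈ (h * ·) '' (K : Set G) ↔ h⁻¹ * g ∈ K := by
  constructor
  · rintro ⟨k, hk, rfl⟩; simpa
  · intro hk; exact ⟨h⁻¹ * g, hk, by group⟩

lemma coset_eq_of_mem {G : Type*} [Group G] {K : Subgroup G} {g h : G}
    (hg : g ∈ (h * ·) '' (K : Set G)) : (h * ·) '' (K : Set G) = (g * ·) '' (K : Set G) := by
  rw [mem_coset_iff] at hg
  ext y
  rw [mem_coset_iff, mem_coset_iff]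
  constructor
  · intro hy
    have := K.mul_mem (K.inv_mem hg) hy
    simpa [mul_assoc] using this
  · intro hy
    have := K.mul_mem hg hy
    simpa [mul_assoc] using this

lemma self_mem_coset {G : Type*} [Group G] {K : Subgroup G} {g : G} :
    g ∈ (g * ·) '' (K : Set G) :=
  mem_coset_iff.mpr (by simpa using K.one_mem)

variable (x₀ : X)

lemma isOpen_basic {g : FundamentalGroup X x₀} {U : Set X} (hU : IsOpen U) (hx : x₀ ∈ U) :
    IsOpen[whTop X x₀] ((g * ·) '' (iStar x₀ U hx : Set (FundamentalGroup X x₀))) :=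
  TopologicalSpace.isOpen_generateFrom_of_mem ⟨g, U, hU, hx, rfl⟩

lemma wh_basis : @TopologicalSpace.IsTopologicalBasis (FundamentalGroup X x₀) (whTop X x₀)
    (whBasis X x₀) := by
  letI := whTop X x₀
  refine ⟨?_, ?_, rfl⟩
  · rintro t₁ ⟨g₁, U₁, hU₁, hx₁, rfl⟩ t₂ ⟨g₂, U₂, hU₂, hx₂, rfl⟩ g ⟨hg₁, hg₂⟩
    have hx : x₀ ∈ U₁ ∩ U₂ := ⟨hx₁, hx₂⟩
    refine ⟨(g * ·) '' (iStar x₀ (U₁ ∩ U₂) hx : Set _),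
      ⟨g, U₁ ∩ U₂, hU₁.inter hU₂, hx, rfl⟩, self_mem_coset, ?_⟩
    rw [coset_eq_of_mem hg₁, coset_eq_of_mem hg₂]
    exact Set.subset_inter
      (Set.image_mono (iStar_mono Set.inter_subset_left hx hx₁))
      (Set.image_mono (iStar_mono Set.inter_subset_right hx hx₂))
  · apply Set.eq_univ_of_forall
    intro g
    exact ⟨(g * ·) '' (iStar x₀ Set.univ (Set.mem_univ x₀) : Set _),
      ⟨g, Set.univ, isOpen_univ, Set.mem_univ x₀, rfl⟩, self_mem_coset⟩

lemma isClosed_basic {g : FundamentalGroup X x₀} {U : Set X} (hU : IsOpen U) (hx : x₀ ∈ U) :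
    IsClosed[whTop X x₀] ((g * ·) '' (iStar x₀ U hx : Set (FundamentalGroup X x₀))) := by
  letI := whTop X x₀
  rw [← isOpen_compl_iff]
  have : ((g * ·) '' (iStar x₀ U hx : Set (FundamentalGroup X x₀)))ᶜ =
      ⋃ (h : FundamentalGroup X x₀)
        (_ : h ∉ (g * ·) '' (iStar x₀ U hx : Set (FundamentalGroup X x₀))),
        (h * ·) '' (iStar x₀ U hx : Set (FundamentalGroup X x₀)) := by
    ext y
    simp only [Set.mem_compl_iff, Set.mem_iUnion]
    constructor
    · intro hy
      exact ⟨y, hy, self_mem_coset⟩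
    · rintro ⟨h, hh, hy⟩ hyg
      exact hh (by rw [coset_eq_of_mem hyg, ← coset_eq_of_mem hy]; exact self_mem_coset)
  rw [this]
  exact isOpen_iUnion fun h => isOpen_iUnion fun _ => isOpen_basic x₀ hU hx

lemma wh_mem_nhds_iff {g : FundamentalGroup X x₀} {s : Set (FundamentalGroup X x₀)} :
    s ∈ @nhds (FundamentalGroup X x₀) (whTop X x₀) g ↔
      ∃ (U : Set X) (hU : IsOpen U) (hx : x₀ ∈ U),
        (g * ·) '' (iStar x₀ U hx : Set (FundamentalGroup X x₀)) ⊆ s := by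
  letI := whTop X x₀
  rw [(wh_basis x₀).mem_nhds_iff]
  constructor
  · rintro ⟨t, ⟨h, U, hU, hx, rfl⟩, hg, hts⟩
    exact ⟨U, hU, hx, by rw [← coset_eq_of_mem hg]; exact hts⟩
  · rintro ⟨U, hU, hx, hsub⟩
    exact ⟨_, ⟨g, U, hU, hx, rfl⟩, self_mem_coset, hsub⟩

lemma wh_regular : @RegularSpace (FundamentalGroup X x₀) (whTop X x₀) := by
  letI := whTop X x₀
  refine RegularSpace.of_exists_mem_nhds_isClosed_subset ?_
  intro g s hs
  obtain ⟨U, hU, hx, hsub⟩ := (wh_mem_nhds_iff x₀).mp hs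
  refine ⟨_, ?_, isClosed_basic x₀ hU hx, hsub⟩
  exact (wh_mem_nhds_iff x₀).mpr ⟨U, hU, hx, le_refl _⟩

lemma small_eq_one_of_t0 (h : @T0Space (FundamentalGroup X x₀) (whTop X x₀)) :
    smallSet x₀ = ({1} : Set (FundamentalGroup X x₀)) := by
  apply Set.eq_singleton_iff_unique_mem.mpr
  constructor
  · intro U hU hx
    exact (iStar x₀ U hx).one_mem
  · intro s hs
    letI := whTop X x₀
    have hins : @Inseparable (FundamentalGroup X x₀) (whTop X x₀) s 1 := by
      rw [inseparable_iff_forall_isOpen]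
      intro O hO
      constructor
      · intro hsO
        obtain ⟨B, ⟨h', U, hU, hx, rfl⟩, hsB, hBO⟩ :=
          (wh_basis x₀).exists_subset_of_mem_open hsO hO
        apply hBO
        rw [coset_eq_of_mem hsB, mem_coset_iff]
        simpa using (iStar x₀ U hx).inv_mem (hs U hU hx)
      · intro h1O
        obtain ⟨B, ⟨h', U, hU, hx, rfl⟩, h1B, hBO⟩ :=
          (wh_basis x₀).exists_subset_of_mem_open h1O hO
        apply hBO
        rw [coset_eq_of_mem h1B, mem_coset_iff]
        rw [inv_one, one_mul]
        exact hs U hU hx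
    exact hins.eq

lemma t1_of_small_eq_one (h : smallSet x₀ = ({1} : Set (FundamentalGroup X x₀))) :
    @T1Space (FundamentalGroup X x₀) (whTop X x₀) := by
  letI := whTop X x₀
  refine ⟨fun g => ?_⟩
  rw [← isOpen_compl_iff, isOpen_iff_forall_mem_open]
  intro h' hh'
  have hne : h'⁻¹ * g ∉ smallSet x₀ := by
    rw [h, Set.mem_singleton_iff]
    intro hc
    exact hh' (Set.mem_singleton_iff.mpr (inv_mul_eq_one.mp hc))
  simp only [smallSet, Set.mem_setOf_eq, not_forall] at hne
  obtain ⟨U, hU, hx, hni⟩ := hne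
  refine ⟨(h' * ·) '' (iStar x₀ U hx : Set _), ?_, isOpen_basic x₀ hU hx, self_mem_coset⟩
  intro y hy
  simp only [Set.mem_compl_iff, Set.mem_singleton_iff]
  rintro rfl
  exact hni (mem_coset_iff.mp hy)

lemma totallySeparated_of_small_eq_one
    (h : smallSet x₀ = ({1} : Set (FundamentalGroup X x₀))) :
    @TotallySeparatedSpace (FundamentalGroup X x₀) (whTop X x₀) := by
  letI := whTop X x₀
  refine ⟨?_⟩
  intro g _ h' _ hgh
  have hne : g⁻¹ * h' ∉ smallSet x₀ := by
    rw [h]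
    simp only [Set.mem_singleton_iff]
    intro hc
    exact hgh (by rwa [inv_mul_eq_one] at hc)
  simp only [smallSet, Set.mem_setOf_eq, not_forall] at hne
  obtain ⟨U, hU, hx, hni⟩ := hne
  refine ⟨(g * ·) '' (iStar x₀ U hx : Set _),
    ((g * ·) '' (iStar x₀ U hx : Set _))ᶜ, isOpen_basic x₀ hU hx,
    (isClosed_basic x₀ hU hx).isOpen_compl, self_mem_coset, ?_, ?_, ?_⟩
  · simp only [Set.mem_compl_iff]
    intro hc
    exact hni (mem_coset_iff.mp hc)
  · rw [Set.union_compl_self]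
  · exact disjoint_compl_right

end Helpers

end GCPaper

open GCPaper

/-- For a connected, locally path connected space `X`, the following are
equivalent for `π₁^wh(X,x₀)`: T₀, T₁, T₂, T₃ (regular and T₁), triviality of `π₁^s(X,x₀)`,
and total separatedness. Moreover `π₁^wh(X,x₀)` is always regular. -/
theorem statement_11 {X : Type u} [TopologicalSpace X] [ConnectedSpace X]
    [LocallyPathConnectedSpace X] (x₀ : X) :
    (@T0Space _ (whTop X x₀) ↔ @T1Space _ (whTop X x₀)) ∧
    (@T1Space _ (whTop X x₀) ↔ @T2Space _ (whTop X x₀)) ∧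
    (@T2Space _ (whTop X x₀) ↔ (@RegularSpace _ (whTop X x₀) ∧ @T1Space _ (whTop X x₀))) ∧
    ((@RegularSpace _ (whTop X x₀) ∧ @T1Space _ (whTop X x₀)) ↔
      smallSet x₀ = ({1} : Set (FundamentalGroup X x₀))) ∧
    (smallSet x₀ = ({1} : Set (FundamentalGroup X x₀)) ↔
      @TotallySeparatedSpace _ (whTop X x₀)) ∧
    @RegularSpace _ (whTop X x₀) := by
  have hreg := wh_regular x₀
  have ht2_of_small : smallSet x₀ = ({1} : Set (FundamentalGroup X x₀)) →
      @T2Space _ (whTop X x₀) := fun h =>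
    @TotallySeparatedSpace.t2Space _ (whTop X x₀) (totallySeparated_of_small_eq_one x₀ h)
  have ht1_of_t2 : @T2Space _ (whTop X x₀) → @T1Space _ (whTop X x₀) := fun h =>
    @T2Space.t1Space _ (whTop X x₀) h
  have ht0_of_t1 : @T1Space _ (whTop X x₀) → @T0Space _ (whTop X x₀) := fun h =>
    @T1Space.t0Space _ (whTop X x₀) h
  have hsmall_of_t1 : @T1Space _ (whTop X x₀) →
      smallSet x₀ = ({1} : Set (FundamentalGroup X x₀)) := fun h =>
    small_eq_one_of_t0 x₀ (ht0_of_t1 h)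
  refine ⟨⟨fun h => t1_of_small_eq_one x₀ (small_eq_one_of_t0 x₀ h), ht0_of_t1⟩,
    ⟨fun h => ht2_of_small (hsmall_of_t1 h), ht1_of_t2⟩,
    ⟨fun h => ⟨hreg, ht1_of_t2 h⟩, fun ⟨_, h1⟩ => ht2_of_small (hsmall_of_t1 h1)⟩,
    ⟨fun ⟨_, h1⟩ => hsmall_of_t1 h1, fun h => ⟨hreg, t1_of_small_eq_one x₀ h⟩⟩,
    ⟨totallySeparated_of_small_eq_one x₀, fun h =>
      hsmall_of_t1 (ht1_of_t2 (@TotallySeparatedSpace.t2Space _ (whTop X x₀) h))⟩,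
    hreg⟩

end
end

section
/- Let X be a connected, locally path connected space and H ≤ π₁(X,x₀). Then X is semilocally path H-connected if and only if H is an open subgroup of π₁^qtop(X,x₀). -/
open CategoryTheory unitInterval Topology

universe u v

noncomputable section

attribute [local instance] Path.Homotopic.setoid

open GCPaper


namespace Aux18

open Set CategoryTheory FundamentalGroupoid

variable {X : Type u} [TopologicalSpace X]

/-- The homotopy class of a path, as a morphism in the fundamental groupoid. -/
def hQ {u v : X} (p : Path u v) :
    FundamentalGroupoid.mk u ⟶ FundamentalGroupoid.mk v := ⟦p⟧

lemma hQ_trans {u v w : X} (p : Path u v) (q : Path v w) :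
    hQ (p.trans q) = hQ p ≫ hQ q := by
  show _ = Path.Homotopic.Quotient.trans _ _
  exact Path.Homotopic.Quotient.mk_trans p q

lemma hQ_id (u : X) : hQ (Path.refl u) = 𝟙 (FundamentalGroupoid.mk u) := rfl

lemma hQ_homotopic {u v : X} {p q : Path u v} (h : p.Homotopic q) : hQ p = hQ q :=
  Quotient.sound h

lemma hQ_symm {u v : X} (p : Path u v) : hQ p.symm = inv (hQ p) := by
  apply IsIso.eq_inv_of_hom_inv_id
  rw [← hQ_trans]
  rw [show hQ (p.trans p.symm) = hQ (Path.refl u) from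
    Quotient.sound ⟨(Path.Homotopy.reflTransSymm p).symm⟩, hQ_id]

lemma hQ_cast {u v u' v' : X} (p : Path u v) (hu : u' = u) (hv : v' = v) :
    hQ (p.cast hu hv) = eqToHom (by rw [hu]) ≫ hQ p ≫ eqToHom (by rw [hv]) := by
  subst hu; subst hv
  simp only [eqToHom_refl, Category.comp_id, Category.id_comp]
  rfl

lemma hQ_cast_refl {u v z : X} (hu : u = z) (hv : v = z) :
    hQ ((Path.refl z).cast hu hv) = eqToHom (by rw [hu, hv]) := by
  subst hu
  rw [hQ_cast, hQ_id]
  simp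

/-- The straight-line path in the unit interval. -/
def linPath (s t : I) : Path s t where
  toFun u := ⟨(1 - u.1) * s.1 + u.1 * t.1, by
    constructor
    · have := u.2.1; have := u.2.2; have := s.2.1; have := t.2.1
      nlinarith
    · have := u.2.1; have := u.2.2; have := s.2.2; have := t.2.2
      nlinarith⟩
  continuous_toFun := by
    apply Continuous.subtype_mk
    fun_prop
  source' := by ext; simp
  target' := by ext; simp

lemma linPath_mem_uIcc (s t u : I) : linPath s t u ∈ Set.uIcc s t := by
  rcases le_total s t with h | h
  · rw [Set.uIcc_of_le h]
    have := u.2.1; have := u.2.2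
    have hst : s.1 ≤ t.1 := h
    constructor
    · show s.1 ≤ (1 - u.1) * s.1 + u.1 * t.1
      nlinarith
    · show (1 - u.1) * s.1 + u.1 * t.1 ≤ t.1
      nlinarith
  · rw [Set.uIcc_of_ge h]
    have := u.2.1; have := u.2.2
    have hst : t.1 ≤ s.1 := h
    constructor
    · show t.1 ≤ (1 - u.1) * s.1 + u.1 * t.1
      nlinarith
    · show (1 - u.1) * s.1 + u.1 * t.1 ≤ s.1
      nlinarith

/-- Any two paths in the unit interval with the same endpoints are homotopic. -/
lemma homotopic_I {s t : I} (f g : Path s t) : f.Homotopic g := by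
  refine ⟨{ toFun := fun p => ⟨(1 - p.1.1) * (f p.2).1 + p.1.1 * (g p.2).1, ?_⟩
            continuous_toFun := ?_
            map_zero_left := ?_
            map_one_left := ?_
            prop' := ?_ }⟩
  · obtain ⟨u, x⟩ := p
    constructor
    · have := u.2.1; have := u.2.2
      have := (f x).2.1; have := (f x).2.2; have := (g x).2.1; have := (g x).2.2
      nlinarith
    · have := u.2.1; have := u.2.2
      have := (f x).2.1; have := (f x).2.2; have := (g x).2.1; have := (g x).2.2
      nlinarith
  · apply Continuous.subtype_mk
    have hf : Continuous fun p : I × I => (f p.2).1 :=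
      continuous_subtype_val.comp (f.continuous.comp continuous_snd)
    have hg : Continuous fun p : I × I => (g p.2).1 :=
      continuous_subtype_val.comp (g.continuous.comp continuous_snd)
    fun_prop
  · intro x; ext; simp
  · intro x; ext; simp
  · intro u x hx
    rcases hx with hx | hx
    · subst hx; ext
      show (1 - u.1) * (f 0).1 + u.1 * (g 0).1 = (f 0).1
      rw [f.source, g.source]; ring
    · simp only [Set.mem_singleton_iff] at hx
      subst hx; ext
      show (1 - u.1) * (f 1).1 + u.1 * (g 1).1 = (f 1).1
      rw [f.target, g.target]; ring

/-- The restriction of a path to a subinterval, as a path between the two values. -/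
def subPath {a b : X} (γ : Path a b) (s t : I) : Path (γ s) (γ t) :=
  (linPath s t).map γ.continuous

lemma range_subPath_subset {a b : X} (γ : Path a b) (s t : I) {S : Set X}
    (h : ∀ w ∈ Set.uIcc s t, γ w ∈ S) : Set.range (subPath γ s t) ⊆ S := by
  rintro - ⟨u, rfl⟩
  exact h _ (linPath_mem_uIcc s t u)

lemma hQ_map_congr {a b : X} (γ : Path a b) {s t : I} (f g : Path s t) :
    hQ (f.map γ.continuous) = hQ (g.map γ.continuous) := by
  apply hQ_homotopic
  exact Path.Homotopic.map (homotopic_I f g) γ.toContinuousMap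

lemma subPath_comp {a b : X} (γ : Path a b) (s m t : I) :
    hQ (subPath γ s m) ≫ hQ (subPath γ m t) = hQ (subPath γ s t) := by
  rw [← hQ_trans]
  show hQ (((linPath s m).map γ.continuous).trans ((linPath m t).map γ.continuous)) = _
  rw [← Path.map_trans]
  exact hQ_map_congr γ _ _

lemma subPath_self {a b : X} (γ : Path a b) {s t : I} (h : s = t) :
    hQ (subPath γ s t) = eqToHom (by rw [h]) := by
  subst h
  have : hQ (subPath γ s s) = hQ ((Path.refl s).map γ.continuous) := hQ_map_congr γ _ _
  rw [this]
  have : (Path.refl s).map γ.continuous = Path.refl (γ s) := by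
    ext u; rfl
  rw [this, hQ_id]; simp

/-- The identity path on the unit interval. -/
def idPath : Path (0 : I) 1 where
  toFun := id
  continuous_toFun := continuous_id
  source' := rfl
  target' := rfl

lemma subPath_full {a b : X} (γ : Path a b) {s t : I} (hs : s = 0) (ht : t = 1) :
    hQ (subPath γ s t) =
      eqToHom (by rw [hs, γ.source]) ≫ hQ γ ≫ eqToHom (by rw [ht, γ.target]) := by
  subst hs; subst ht
  have h1 : hQ (subPath γ 0 1) = hQ (idPath.map γ.continuous) := hQ_map_congr γ _ _
  have h2 : idPath.map γ.continuous = γ.cast γ.source γ.target := by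
    ext u; rfl
  rw [h1, h2, hQ_cast]

/-- The underlying arrow of an element of the fundamental group. -/
abbrev _root_.FundamentalGroup.hom {x : X} (f : FundamentalGroup X x) :
    FundamentalGroupoid.mk x ⟶ FundamentalGroupoid.mk x := f

/-- Package a loop in the fundamental groupoid as an element of the fundamental group. -/
def toFG {x : X} (f : FundamentalGroupoid.mk x ⟶ FundamentalGroupoid.mk x) :
    FundamentalGroup X x := f

lemma toFG_hom {x : X} (f : FundamentalGroupoid.mk x ⟶ FundamentalGroupoid.mk x) :
    (toFG f).hom = f := rfl

lemma aut_ext {x : X} {f g : FundamentalGroup X x} (h : f.hom = g.hom) : f = g :=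
  h

lemma loopClass_hom {x : X} (γ : Path x x) : (loopClass γ).hom = hQ γ := rfl

lemma mul_hom {x : X} (f g : FundamentalGroup X x) : (f * g).hom = g.hom ≫ f.hom := rfl

lemma conjAlong_hom {x₀ x : X} (α : Path x₀ x) (g : FundamentalGroup X x) :
    (conjAlong α g).hom = hQ α ≫ g.hom ≫ inv (hQ α) := by
  show hQ α ≫ g.hom ≫ Groupoid.inv (hQ α) = _
  rw [Groupoid.inv_eq_inv]

lemma mem_conjSubgroup_iff {x₀ x : X} (α : Path x₀ x) (H : Subgroup (FundamentalGroup X x₀))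
    (g : FundamentalGroup X x) : g ∈ conjSubgroup α H ↔ conjAlong α g ∈ H :=
  Subgroup.mem_map_equiv

lemma π₁map_loopClass {A B : Type u} [TopologicalSpace A] [TopologicalSpace B]
    (f : C(A, B)) (a : A) (γ : Path a a) :
    π₁map f a (loopClass γ) = loopClass (γ.map f.continuous) := by
  apply aut_ext
  exact (Path.Homotopic.Quotient.mk_map γ f).symm

lemma loopClass_mem_iStar {x : X} {U : Set X} (hx : x ∈ U) (γ : Path x x)
    (h : Set.range γ ⊆ U) : loopClass γ ∈ iStar x U hx := by
  let f₀ : C(U, X) := ⟨Subtype.val, continuous_subtype_val⟩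
  let γ' : Path (⟨x, hx⟩ : U) ⟨x, hx⟩ :=
    { toFun := fun t => ⟨γ t, h (Set.mem_range_self t)⟩
      continuous_toFun := γ.continuous.subtype_mk _
      source' := Subtype.ext γ.source
      target' := Subtype.ext γ.target }
  refine Subgroup.mem_map.mpr
    ⟨π₁map f₀ ⟨x, hx⟩ (loopClass γ'), MonoidHom.mem_range.mpr ⟨loopClass γ', rfl⟩, ?_⟩
  calc (eqCast rfl).toMonoidHom (π₁map f₀ ⟨x, hx⟩ (loopClass γ'))
      = π₁map f₀ ⟨x, hx⟩ (loopClass γ') := rfl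
    _ = loopClass (γ'.map f₀.continuous) := π₁map_loopClass f₀ ⟨x, hx⟩ γ'
    _ = loopClass γ := by
          have he : γ'.map f₀.continuous = γ := by ext t; rfl
          rw [he]

lemma exists_of_mem_iStar {x : X} {U : Set X} {hx : x ∈ U} {g : FundamentalGroup X x}
    (hg : g ∈ iStar x U hx) :
    ∃ γ : Path x x, Set.range γ ⊆ U ∧ loopClass γ = g := by
  rw [iStar, imageSubgroup, Subgroup.mem_map] at hg
  obtain ⟨y, hy, rfl⟩ := hg
  obtain ⟨g₀, rfl⟩ := MonoidHom.mem_range.mp hy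
  obtain ⟨γ₀, hγ₀⟩ := Quotient.exists_rep (g₀.hom : Path.Homotopic.Quotient _ _)
  have hg₀ : g₀ = loopClass γ₀ := aut_ext hγ₀.symm
  refine ⟨γ₀.map continuous_subtype_val, ?_, ?_⟩
  · rintro - ⟨t, rfl⟩
    exact (γ₀ t).2
  · symm
    calc (eqCast rfl).toMonoidHom (π₁map ⟨Subtype.val, continuous_subtype_val⟩ ⟨x, hx⟩ g₀)
        = π₁map ⟨Subtype.val, continuous_subtype_val⟩ ⟨x, hx⟩ g₀ := rfl
      _ = π₁map ⟨Subtype.val, continuous_subtype_val⟩ ⟨x, hx⟩ (loopClass γ₀) := by rw [hg₀]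
      _ = loopClass (γ₀.map continuous_subtype_val) := π₁map_loopClass _ _ γ₀

lemma one_hom {x : X} : (1 : FundamentalGroup X x).hom = 𝟙 _ := rfl

/-- The prefix of a path up to time `t`, as a path from the source. -/
def prePath {a b : X} (γ : Path a b) (t : I) : Path a (γ t) :=
  (subPath γ 0 t).cast γ.source.symm rfl

lemma hQ_prePath {a b : X} (γ : Path a b) (t : I) :
    hQ (prePath γ t) =
      eqToHom (congrArg FundamentalGroupoid.mk γ.source.symm) ≫ hQ (subPath γ 0 t) := by
  rw [prePath, hQ_cast]
  simp

lemma mem_ball_of_uIcc {a b w : I} {ρ : ℝ} (hb : dist b a < ρ) (hw : w ∈ Set.uIcc a b) :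
    dist w a < ρ := by
  have key : |(w : ℝ) - a| ≤ |(b : ℝ) - a| := by
    rcases le_total a b with h | h
    · rw [Set.uIcc_of_le h] at hw
      obtain ⟨h1, h2⟩ := hw
      have h1' : (a : ℝ) ≤ w := h1
      have h2' : (w : ℝ) ≤ b := h2
      rw [abs_of_nonneg (by linarith), abs_of_nonneg (by linarith)]
      linarith
    · rw [Set.uIcc_of_ge h] at hw
      obtain ⟨h1, h2⟩ := hw
      have h1' : (b : ℝ) ≤ w := h1
      have h2' : (w : ℝ) ≤ a := h2
      rw [abs_of_nonpos (by linarith), abs_of_nonpos (by linarith)]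
      linarith
  calc dist w a = |(w : ℝ) - a| := by rw [Subtype.dist_eq, Real.dist_eq]
    _ ≤ |(b : ℝ) - a| := key
    _ = dist b a := by rw [Subtype.dist_eq, Real.dist_eq]
    _ < ρ := hb

lemma isCompact_Icc_I (a b : I) : IsCompact (Set.Icc a b) := by
  have h : Set.Icc a b = Subtype.val ⁻¹' (Set.Icc (a : ℝ) (b : ℝ)) := by
    ext w
    simp [Set.mem_Icc, ← Subtype.coe_le_coe]
  exact ((h ▸ (isClosed_Icc.preimage continuous_subtype_val)) : IsClosed (Set.Icc a b)).isCompact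

lemma isOpen_mapsTo_path {x y : X} {K : Set I} (hK : IsCompact K) {S : Set X}
    (hS : IsOpen S) : IsOpen {γ : Path x y | Set.MapsTo ⇑γ K S} := by
  have h : {γ : Path x y | Set.MapsTo ⇑γ K S} =
      ((↑) : Path x y → C(I, X)) ⁻¹' {f | Set.MapsTo ⇑f K S} := rfl
  rw [h]
  exact (ContinuousMap.isOpen_setOf_mapsTo hK hS).preimage continuous_induced_dom

end Aux18

/-- For `X` connected and locally path connected and `H ≤ π₁(X,x₀)`, `X` is
semilocally path `H`-connected (for every path `α` from `x₀` there is an open neighbourhood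
`U` of `α(1)` with `i_*π₁(U,α(1)) ≤ [α⁻¹Hα]`) if and only if `H` is an open subgroup of
`π₁^qtop(X,x₀)`. -/
theorem statement_18 {X : Type u} [TopologicalSpace X] [ConnectedSpace X]
    [LocallyPathConnectedSpace X] (x₀ : X) (H : Subgroup (FundamentalGroup X x₀)) :
    (∀ (x : X) (α : Path x₀ x), ∃ (U : Set X) (_ : IsOpen U) (hx : x ∈ U),
        iStar x U hx ≤ conjSubgroup α H) ↔
      IsOpen[qtop X x₀] (H : Set (FundamentalGroup X x₀)) := by
  classical
  constructor
  · intro hsemi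
    apply isOpen_coinduced.mpr
    rw [isOpen_iff_forall_mem_open]
    intro δ hδ
    choose U hUop hUmem hUle using fun t : I => hsemi (δ t) (Aux18.prePath δ t)
    set W : I → Set X := fun t => pathComponentIn (U t) (δ t) with hWdef
    have hWop : ∀ t, IsOpen (W t) := fun t => (hUop t).pathComponentIn _
    have hWmem : ∀ t, δ t ∈ W t := fun t => mem_pathComponentIn_self (hUmem t)
    have hWsub : ∀ t, W t ⊆ U t := fun _ => pathComponentIn_subset
    have hball : ∀ t : I, ∃ r : ℝ, 0 < r ∧ ∀ w : I, dist w t < r → δ w ∈ W t := by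
      intro t
      obtain ⟨r, hr, hsub⟩ := Metric.isOpen_iff.mp ((hWop t).preimage δ.continuous) t (hWmem t)
      exact ⟨r, hr, fun w hw => hsub hw⟩
    choose r hrpos hrW using hball
    obtain ⟨lam, hlam, hleb⟩ := lebesgue_number_lemma_of_metric
      (isCompact_univ : IsCompact (Set.univ : Set I))
      (fun t : I => Metric.isOpen_ball)
      (fun w _ => Set.mem_iUnion.mpr ⟨w, Metric.mem_ball_self (hrpos w)⟩)
    obtain ⟨n₀, hn₀⟩ := exists_nat_one_div_lt hlam
    set N : ℕ := n₀ + 1 with hNdef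
    have hNpos : 0 < N := Nat.succ_pos _
    have hNlt : (1 : ℝ) / N < lam := by
      rw [hNdef]
      push_cast
      exact hn₀
    have hνex : ∀ k : ℕ, min ((k : ℝ) / N) 1 ∈ I :=
      fun k => ⟨le_min (by positivity) zero_le_one, min_le_right _ _⟩
    set ν : ℕ → I := fun k => ⟨min ((k : ℝ) / N) 1, hνex k⟩ with hνdef
    have hν0 : ν 0 = 0 := by
      ext
      show min (((0 : ℕ) : ℝ) / N) 1 = (0 : ℝ)
      norm_num
    have hν1' : ∀ k, N ≤ k → ν k = 1 := by
      intro k hk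
      ext
      show min ((k : ℝ) / N) 1 = (1 : ℝ)
      rw [min_eq_right]
      rw [le_div_iff₀ (by positivity)]
      rw [one_mul]
      exact_mod_cast hk
    have hν1 : ν N = 1 := hν1' N le_rfl
    have hνmono : ∀ k, ν k ≤ ν (k + 1) := by
      intro k
      show min ((k : ℝ) / N) 1 ≤ min ((((k + 1) : ℕ) : ℝ) / N) 1
      push_cast
      apply min_le_min _ le_rfl
      gcongr
      linarith
    have hνdiff : ∀ k, ((ν (k + 1) : I) : ℝ) - ((ν k : I) : ℝ) ≤ 1 / N := by
      intro k
      show min ((((k + 1) : ℕ) : ℝ) / N) 1 - min ((k : ℝ) / N) 1 ≤ 1 / N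
      have hk1 : (((k + 1) : ℕ) : ℝ) = (k : ℝ) + 1 := by push_cast; ring
      rw [hk1]
      have key2 : ((k : ℝ) + 1) / N = (k : ℝ) / N + 1 / N := add_div _ _ _
      have hposN : (0 : ℝ) < 1 / N := by positivity
      rcases min_cases (((k : ℝ) + 1) / N) 1 with ⟨e1, c1⟩ | ⟨e1, c1⟩ <;>
        rcases min_cases ((k : ℝ) / N) 1 with ⟨e2, c2⟩ | ⟨e2, c2⟩ <;>
        rw [e1, e2] <;> linarith
    choose T hT using fun k : ℕ => hleb (ν k) trivial
    have hseg : ∀ k, ∀ w : I, w ∈ Set.Icc (ν k) (ν (k + 1)) →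
        w ∈ Metric.ball (T k) (r (T k)) := by
      intro k w hw
      apply hT k
      show dist w (ν k) < lam
      obtain ⟨h1, h2⟩ := hw
      have h1' : ((ν k : I) : ℝ) ≤ w := h1
      have h2' : (w : ℝ) ≤ ((ν (k + 1) : I) : ℝ) := h2
      have h3 := hνdiff k
      calc dist w (ν k) = |(w : ℝ) - ((ν k : I) : ℝ)| := by rw [Subtype.dist_eq, Real.dist_eq]
        _ = (w : ℝ) - ((ν k : I) : ℝ) := abs_of_nonneg (by linarith)
        _ ≤ 1 / N := by linarith
        _ < lam := hNlt
    have hsegW : ∀ k, ∀ w : I, w ∈ Set.Icc (ν k) (ν (k + 1)) → δ w ∈ W (T k) :=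
      fun k w hw => hrW (T k) w (Metric.mem_ball.mp (hseg k w hw))
    have hνball : ∀ k, ν k ∈ Metric.ball (T k) (r (T k)) :=
      fun k => hseg k (ν k) ⟨le_rfl, hνmono k⟩
    have harc : ∀ k, ∀ w ∈ Set.uIcc (T k) (ν k), δ w ∈ W (T k) := by
      intro k w hw
      exact hrW (T k) w (Aux18.mem_ball_of_uIcc (Metric.mem_ball.mp (hνball k)) hw)
    set V : ℕ → Set X := fun k => pathComponentIn (W (T (k - 1)) ∩ W (T k)) (δ (ν k))
      with hVdef
    have hsucc : ∀ k : ℕ, 0 < k → (k - 1) + 1 = k := fun k hk => Nat.succ_pred_eq_of_pos hk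
    have hνmono' : ∀ k : ℕ, 0 < k → ν (k - 1) ≤ ν k := by
      intro k hk
      have h := hνmono (k - 1)
      rwa [hsucc k hk] at h
    have hVmem : ∀ k, 0 < k → δ (ν k) ∈ W (T (k - 1)) ∩ W (T k) := by
      intro k h1
      refine ⟨?_, hsegW k (ν k) ⟨le_rfl, hνmono k⟩⟩
      apply hsegW (k - 1) (ν k)
      rw [hsucc k h1]
      exact ⟨hνmono' k h1, le_rfl⟩
    have hVopen : ∀ k, IsOpen (V k) := fun k => ((hWop _).inter (hWop _)).pathComponentIn _
    have hδν0 : δ (ν 0) = x₀ := by rw [hν0]; exact δ.source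
    have hδν1 : ∀ k, N ≤ k → δ (ν k) = x₀ := by
      intro k hk
      rw [hν1' k hk]
      exact δ.target
    have hδend : ∀ k : ℕ, k = 0 ∨ N ≤ k → δ (ν k) = x₀ := by
      rintro k (rfl | hk)
      · exact hδν0
      · exact hδν1 k hk
    have hx₀W0 : x₀ ∈ W (T 0) := by
      have h := hsegW 0 (ν 0) ⟨le_rfl, hνmono 0⟩
      rwa [hδν0] at h
    have hx₀WN : x₀ ∈ W (T (N - 1)) := by
      have h := hsegW (N - 1) (ν N) (by
        rw [hsucc N hNpos]
        exact ⟨hνmono' N hNpos, le_rfl⟩)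
      rwa [hδν1 N le_rfl] at h
    refine ⟨(⋂ k ∈ Finset.range N,
        {γp : Path x₀ x₀ | Set.MapsTo ⇑γp (Set.Icc (ν k) (ν (k + 1))) (W (T k))}) ∩
        ⋂ k ∈ Finset.Ico 1 N, {γp : Path x₀ x₀ | γp (ν k) ∈ V k}, ?_, ?_, ?_⟩
    · intro ε hε
      obtain ⟨hε1', hε2'⟩ := hε
      have hε1 : ∀ k, k < N → Set.MapsTo ⇑ε (Set.Icc (ν k) (ν (k + 1))) (W (T k)) :=
        fun k hk => Set.mem_iInter₂.mp hε1' k (Finset.mem_range.mpr hk)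
      have hε2 : ∀ k, 0 < k → k < N → ε (ν k) ∈ V k :=
        fun k h1 h2 => Set.mem_iInter₂.mp hε2' k (Finset.mem_Ico.mpr ⟨h1, h2⟩)
      have hεend : ∀ k : ℕ, k = 0 ∨ N ≤ k → ε (ν k) = x₀ := by
        rintro k (rfl | hk)
        · rw [hν0]; exact ε.source
        · rw [hν1' k hk]; exact ε.target
      have hσex : ∀ k : ℕ, ∃ p : Path (δ (ν k)) (ε (ν k)),
          (∀ hk : k = 0 ∨ N ≤ k, Aux18.hQ p =
            eqToHom (by rw [hδend k hk, hεend k hk]) ∧ Set.range p ⊆ {x₀}) ∧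
          (0 < k → k < N → Set.range p ⊆ W (T (k - 1)) ∩ W (T k)) := by
        intro k
        by_cases hk : k = 0 ∨ N ≤ k
        · refine ⟨(Path.refl x₀).cast (hδend k hk) (hεend k hk), fun _ => ⟨?_, ?_⟩, ?_⟩
          · rw [Aux18.hQ_cast_refl]
          · rintro - ⟨t, rfl⟩
            exact rfl
          · intro h1 h2
            exfalso
            rcases hk with rfl | hk
            · omega
            · omega
        · push_neg at hk
          obtain ⟨hk1, hk2⟩ := hk
          obtain ⟨p, hp⟩ := hε2 k (Nat.pos_of_ne_zero hk1) hk2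
          refine ⟨p, fun hk' => ?_, fun _ _ => Set.range_subset_iff.mpr hp⟩
          exfalso
          rcases hk' with rfl | hk'
          · exact hk1 rfl
          · omega
      choose sp hσend hσmid using hσex
      have hEε : FundamentalGroupoid.mk x₀ = FundamentalGroupoid.mk (ε 0) :=
        congrArg FundamentalGroupoid.mk ε.source.symm
      have hEδ : FundamentalGroupoid.mk (δ 0) = FundamentalGroupoid.mk x₀ :=
        congrArg FundamentalGroupoid.mk δ.source
      have main : ∀ k, k ≤ N →
          (Aux18.toFG (eqToHom hEε ≫ Aux18.hQ (Aux18.subPath ε 0 (ν k)) ≫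
            inv (Aux18.hQ (sp k)) ≫ inv (Aux18.hQ (Aux18.subPath δ 0 (ν k))) ≫
            eqToHom hEδ)) ∈ H := by
        intro k
        induction k with
        | zero =>
          intro _
          have h1 : (Aux18.toFG (eqToHom hEε ≫ Aux18.hQ (Aux18.subPath ε 0 (ν 0)) ≫
              inv (Aux18.hQ (sp 0)) ≫ inv (Aux18.hQ (Aux18.subPath δ 0 (ν 0))) ≫
              eqToHom hEδ)) = 1 := by
            apply Aux18.aut_ext
            rw [Aux18.one_hom, Aux18.toFG_hom,
              Aux18.subPath_self ε hν0.symm, Aux18.subPath_self δ hν0.symm,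
              (hσend 0 (Or.inl rfl)).1]
            simp
          rw [h1]
          exact H.one_mem
        | succ k ih =>
          intro hk1
          have hkN : k < N := Nat.lt_of_succ_le hk1
          have ihH := ih (Nat.le_of_lt hkN)
          have hω : Set.range (Aux18.subPath δ (T k) (ν k)) ⊆ W (T k) :=
            Aux18.range_subPath_subset δ _ _ (harc k)
          have hσk : Set.range (sp k) ⊆ W (T k) := by
            rcases Nat.eq_zero_or_pos k with rfl | hkpos
            · intro w hw
              have h2 := (hσend 0 (Or.inl rfl)).2 hw
              rw [Set.mem_singleton_iff] at h2
              rw [h2]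
              exact hx₀W0
            · exact fun w hw => ((hσmid k hkpos hkN) hw).2
          have he : Set.range (Aux18.subPath ε (ν k) (ν (k + 1))) ⊆ W (T k) := by
            apply Aux18.range_subPath_subset
            intro w hw
            rw [Set.uIcc_of_le (hνmono k)] at hw
            exact hε1 k hkN hw
          have hd : Set.range (Aux18.subPath δ (ν k) (ν (k + 1))) ⊆ W (T k) := by
            apply Aux18.range_subPath_subset
            intro w hw
            rw [Set.uIcc_of_le (hνmono k)] at hw
            exact hsegW k w hw
          have hσk1 : Set.range (sp (k + 1)) ⊆ W (T k) := by
            rcases lt_or_ge (k + 1) N with hlt | hge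
            · intro w hw
              have h2 := ((hσmid (k + 1) (Nat.succ_pos k) hlt) hw).1
              simpa using h2
            · intro w hw
              have h2 := (hσend (k + 1) (Or.inr hge)).2 hw
              rw [Set.mem_singleton_iff] at h2
              rw [h2]
              have hNk : N - 1 = k := by omega
              rw [← hNk]
              exact hx₀WN
          set Λ : Path (δ (T k)) (δ (T k)) :=
            (Aux18.subPath δ (T k) (ν k)).trans ((sp k).trans
              ((Aux18.subPath ε (ν k) (ν (k + 1))).trans ((sp (k + 1)).symm.trans
                ((Aux18.subPath δ (ν k) (ν (k + 1))).symm.trans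
                  (Aux18.subPath δ (T k) (ν k)).symm)))) with hΛ
          have hΛrange : Set.range Λ ⊆ U (T k) := by
            refine Set.Subset.trans ?_ (hWsub (T k))
            rw [hΛ]
            simp only [Path.trans_range, Path.symm_range, Set.union_subset_iff]
            exact ⟨hω, hσk, he, hσk1, hd, hω⟩
          have hypel : conjAlong (Aux18.prePath δ (T k)) (loopClass Λ) ∈ H :=
            (Aux18.mem_conjSubgroup_iff _ _ _).mp
              (hUle (T k) (Aux18.loopClass_mem_iStar (hUmem (T k)) Λ hΛrange))
          have hstep : (Aux18.toFG (eqToHom hEε ≫ Aux18.hQ (Aux18.subPath ε 0 (ν (k + 1))) ≫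
              inv (Aux18.hQ (sp (k + 1))) ≫ inv (Aux18.hQ (Aux18.subPath δ 0 (ν (k + 1)))) ≫
              eqToHom hEδ)) =
              conjAlong (Aux18.prePath δ (T k)) (loopClass Λ) *
              (Aux18.toFG (eqToHom hEε ≫ Aux18.hQ (Aux18.subPath ε 0 (ν k)) ≫
                inv (Aux18.hQ (sp k)) ≫ inv (Aux18.hQ (Aux18.subPath δ 0 (ν k))) ≫
                eqToHom hEδ)) := by
            apply Aux18.aut_ext
            rw [Aux18.mul_hom, Aux18.conjAlong_hom, Aux18.loopClass_hom, Aux18.toFG_hom, Aux18.toFG_hom,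
              Aux18.hQ_prePath, hΛ,
              Aux18.hQ_trans, Aux18.hQ_trans, Aux18.hQ_trans, Aux18.hQ_trans, Aux18.hQ_trans,
              Aux18.hQ_symm, Aux18.hQ_symm, Aux18.hQ_symm,
              ← Aux18.subPath_comp ε 0 (ν k) (ν (k + 1)),
              ← Aux18.subPath_comp δ 0 (ν k) (ν (k + 1)),
              ← Aux18.subPath_comp δ 0 (T k) (ν k)]
            simp
          rw [hstep]
          exact H.mul_mem hypel ihH
      have hfin := main N le_rfl
      have hεeq : loopClass ε = loopClass δ *
          (Aux18.toFG (eqToHom hEε ≫ Aux18.hQ (Aux18.subPath ε 0 (ν N)) ≫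
            inv (Aux18.hQ (sp N)) ≫ inv (Aux18.hQ (Aux18.subPath δ 0 (ν N))) ≫
            eqToHom hEδ)) := by
        apply Aux18.aut_ext
        rw [Aux18.mul_hom, Aux18.toFG_hom, Aux18.loopClass_hom, Aux18.loopClass_hom,
          Aux18.subPath_full ε rfl hν1, Aux18.subPath_full δ rfl hν1,
          (hσend N (Or.inr le_rfl)).1]
        simp
      show loopClass ε ∈ H
      rw [hεeq]
      exact H.mul_mem hδ hfin
    · apply IsOpen.inter
      · exact isOpen_biInter_finset fun k _ =>
          Aux18.isOpen_mapsTo_path (Aux18.isCompact_Icc_I _ _) (hWop _)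
      · refine isOpen_biInter_finset fun k _ => ?_
        have h : {γp : Path x₀ x₀ | γp (ν k) ∈ V k} =
            (fun γp : Path x₀ x₀ => γp (ν k)) ⁻¹' V k := rfl
        rw [h]
        exact (hVopen k).preimage (continuous_eval_const (ν k))
    · constructor
      · exact Set.mem_iInter₂.mpr fun k _ => fun w hw => hsegW k w hw
      · refine Set.mem_iInter₂.mpr fun k hk => ?_
        have hk' := Finset.mem_Ico.mp hk
        exact mem_pathComponentIn_self (hVmem k hk'.1)
  · intro hopen x α
    have hP : IsOpen (loopClass ⁻¹' (H : Set (FundamentalGroup X x₀))) :=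
      isOpen_coinduced.mp hopen
    set F : Path x x → Path x₀ x₀ := fun γ => (α.trans γ).trans α.symm with hF
    have hFc : Continuous F :=
      (continuous_const.path_trans continuous_id).path_trans continuous_const
    have hV : IsOpen (F ⁻¹' (loopClass ⁻¹' (H : Set (FundamentalGroup X x₀)))) :=
      hP.preimage hFc
    have hreflV : Path.refl x ∈ F ⁻¹' (loopClass ⁻¹' (H : Set (FundamentalGroup X x₀))) := by
      have h1 : loopClass (F (Path.refl x)) = 1 := by
        apply Aux18.aut_ext
        rw [Aux18.loopClass_hom]
        show Aux18.hQ ((α.trans (Path.refl x)).trans α.symm) = _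
        rw [Aux18.hQ_trans, Aux18.hQ_trans, Aux18.hQ_symm, Aux18.hQ_id]
        show _ = 𝟙 _
        simp
      show loopClass (F (Path.refl x)) ∈ H
      rw [h1]
      exact H.one_mem
    obtain ⟨O, hOopen, hOeq⟩ := isOpen_induced_iff.mp hV
    have hreflO : ((Path.refl x : Path x x) : C(I, X)) ∈ O := by
      rw [← hOeq] at hreflV
      exact hreflV
    have hB := TopologicalSpace.isTopologicalBasis_of_subbasis
      (ContinuousMap.compactOpen_eq (X := I) (Y := X))
    obtain ⟨b, hbB, hreflb, hbO⟩ := hB.exists_subset_of_mem_open hreflO hOopen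
    obtain ⟨s, ⟨hsfin, hssub⟩, rfl⟩ := hbB
    have hchoice : ∀ m : Set C(I, X), ∃ KU : Set I × Set X,
        m ∈ s → IsCompact KU.1 ∧ IsOpen KU.2 ∧ m = {f : C(I, X) | Set.MapsTo f KU.1 KU.2} := by
      intro m
      by_cases hm : m ∈ s
      · obtain ⟨K, hK, Uo, hUo, heq⟩ := hssub hm
        exact ⟨(K, Uo), fun _ => ⟨hK, hUo, heq.symm⟩⟩
      · exact ⟨(∅, ∅), fun h => absurd h hm⟩
    choose KU hKU using hchoice
    refine ⟨⋂ m ∈ s, (if x ∈ (KU m).2 then (KU m).2 else Set.univ), ?_, ?_, ?_⟩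
    · refine hsfin.isOpen_biInter (fun m hm => ?_)
      split
      · exact (hKU m hm).2.1
      · exact isOpen_univ
    · refine Set.mem_iInter₂.mpr (fun m hm => ?_)
      split
      · assumption
      · trivial
    · intro g hg
      obtain ⟨γ, hγrange, rfl⟩ := Aux18.exists_of_mem_iStar hg
      rw [Aux18.mem_conjSubgroup_iff]
      have hγO : (γ : C(I, X)) ∈ O := by
        apply hbO
        refine Set.mem_sInter.mpr (fun m hm => ?_)
        rw [(hKU m hm).2.2]
        intro p hp
        by_cases hxm : x ∈ (KU m).2
        · have h2 := hγrange (Set.mem_range_self p)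
          have h3 := Set.mem_iInter₂.mp h2 m hm
          rwa [if_pos hxm] at h3
        · exfalso
          apply hxm
          have h4 := Set.mem_sInter.mp hreflb m hm
          rw [(hKU m hm).2.2] at h4
          simpa using h4 hp
      have hFγ : loopClass (F γ) ∈ H := by
        have : γ ∈ F ⁻¹' (loopClass ⁻¹' (H : Set (FundamentalGroup X x₀))) := by
          rw [← hOeq]
          exact hγO
        exact this
      have hconj : conjAlong α (loopClass γ) = loopClass (F γ) := by
        apply Aux18.aut_ext
        rw [Aux18.conjAlong_hom, Aux18.loopClass_hom, Aux18.loopClass_hom]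
        show _ = Aux18.hQ ((α.trans γ).trans α.symm)
        rw [Aux18.hQ_trans, Aux18.hQ_trans, Aux18.hQ_symm]
        simp
      rw [hconj]
      exact hFγ

end
end
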